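/- Let f : ℝⁿ → ℝⁿ be the continuous piecewise-linear map f(x) = A_L x + b for cᵀx ≤ 0 and f(x) = A_R x + b for cᵀx ≥ 0, with A_R = A_L + a cᵀ. If det(A_L) · det(A_R) > 0 then f is a bijection. -/
import Mathlib

open Matrix

/-- A continuous piecewise-linear map with `det A_L ⬝ det A_R > 0` is a bijection. -/
theorem stmt_2 (n : ℕ) (A_L A_R : Matrix (Fin n) (Fin n) ℝ) (a b c : Fin n → ℝ)
    (hcont : A_R = A_L + Matrix.vecMulVec a c)
    (f : (Fin n → ℝ) → (Fin n → ℝ))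
    (hf : ∀ x, f x = if c ⬝ᵥ x ≤ 0 then A_L.mulVec x + b else A_R.mulVec x + b)
    (hdet : 0 < A_L.det * A_R.det) :
    Function.Bijective f := by
  have hdetne : A_L.det * A_R.det ≠ 0 := ne_of_gt hdet
  have hL : IsUnit A_L.det := isUnit_iff_ne_zero.mpr (left_ne_zero_of_mul hdetne)
  have hR : IsUnit A_R.det := isUnit_iff_ne_zero.mpr (right_ne_zero_of_mul hdetne)
  set u : Fin n → ℝ := A_L⁻¹ *ᵥ a with hu
  set d : Fin n → ℝ := c ᵥ* A_L⁻¹ with hd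
  set μ : ℝ := 1 + c ⬝ᵥ u with hμ
  -- A_L⁻¹ * A_R = 1 + vecMulVec u c
  have hmul : A_L⁻¹ * A_R = 1 + vecMulVec u c := by
    rw [hcont, Matrix.mul_add, Matrix.nonsing_inv_mul _ hL]
    congr 1
    ext i j
    simp [Matrix.mul_apply, Matrix.vecMulVec_apply, hu, Matrix.mulVec, dotProduct,
      Finset.sum_mul, mul_assoc]
  -- key: d ᵥ* A_R = μ • c
  have hdR : d ᵥ* A_R = μ • c := by
    rw [hd, Matrix.vecMul_vecMul, hmul, Matrix.vecMul_add, Matrix.vecMul_one]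
    ext j
    simp only [Matrix.vecMul, Matrix.vecMulVec_apply, dotProduct, Pi.add_apply,
      Pi.smul_apply, smul_eq_mul, hμ, add_mul, one_mul, Finset.sum_mul]
    congr 1
    apply Finset.sum_congr rfl
    intro i _
    ring
  have hdL : ∀ x, d ⬝ᵥ (A_L *ᵥ x) = c ⬝ᵥ x := by
    intro x
    rw [dotProduct_mulVec, hd, Matrix.vecMul_vecMul, Matrix.nonsing_inv_mul _ hL,
      Matrix.vecMul_one]
  have hdRx : ∀ x, d ⬝ᵥ (A_R *ᵥ x) = μ * (c ⬝ᵥ x) := by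
    intro x
    rw [dotProduct_mulVec, hdR, smul_dotProduct, smul_eq_mul]
  -- determinant lemma: det A_R = det A_L * μ
  have hdetR : A_R.det = A_L.det * μ := by
    have h1 : A_R = A_L * (1 + vecMulVec u c) := by
      rw [← hmul, ← Matrix.mul_assoc, Matrix.mul_nonsing_inv _ hL, Matrix.one_mul]
    have h2 : (1 + vecMulVec u c).det = μ := by
      rw [Matrix.vecMulVec_eq Unit, Matrix.det_one_add_mul_comm]
      rw [Matrix.det_unique]
      simp [Matrix.mul_apply, Matrix.replicateRow_apply, Matrix.replicateCol_apply, hμ, dotProduct,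
        mul_comm]
    rw [h1, Matrix.det_mul, h2]
  have hμpos : 0 < μ := by
    have hsq : 0 < A_L.det * A_L.det :=
      mul_self_pos.mpr (isUnit_iff_ne_zero.mp hL)
    have h3 : 0 < A_L.det * A_L.det * μ := by
      rw [mul_assoc, ← hdetR]; exact hdet
    by_contra h
    push_neg at h
    nlinarith [h3, hsq]
  -- c ⬝ᵥ (A_R⁻¹ *ᵥ w) = (d ⬝ᵥ w) / μ
  have hcR : ∀ w, c ⬝ᵥ (A_R⁻¹ *ᵥ w) = (d ⬝ᵥ w) / μ := by
    intro w
    have h1 : μ * (c ⬝ᵥ (A_R⁻¹ *ᵥ w)) = d ⬝ᵥ w := by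
      rw [← hdRx, Matrix.mulVec_mulVec, Matrix.mul_nonsing_inv _ hR, Matrix.one_mulVec]
    rw [eq_div_iff (ne_of_gt hμpos), mul_comm]
    exact h1
  have hcL : ∀ w, c ⬝ᵥ (A_L⁻¹ *ᵥ w) = d ⬝ᵥ w := by
    intro w
    rw [hd, ← dotProduct_mulVec]
  -- explicit inverse
  set g : (Fin n → ℝ) → (Fin n → ℝ) :=
    fun y => if d ⬝ᵥ (y - b) ≤ 0 then A_L⁻¹ *ᵥ (y - b) else A_R⁻¹ *ᵥ (y - b) with hg
  have hLinv : ∀ w, A_L⁻¹ *ᵥ (A_L *ᵥ w) = w := by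
    intro w
    rw [Matrix.mulVec_mulVec, Matrix.nonsing_inv_mul _ hL, Matrix.one_mulVec]
  have hRinv : ∀ w, A_R⁻¹ *ᵥ (A_R *ᵥ w) = w := by
    intro w
    rw [Matrix.mulVec_mulVec, Matrix.nonsing_inv_mul _ hR, Matrix.one_mulVec]
  have hgy : ∀ y, g y = if d ⬝ᵥ (y - b) ≤ 0 then A_L⁻¹ *ᵥ (y - b) else A_R⁻¹ *ᵥ (y - b) :=
    fun y => rfl
  have hleft : Function.LeftInverse g f := by
    intro x
    rw [hf x]
    by_cases hx : c ⬝ᵥ x ≤ 0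
    · rw [if_pos hx, hgy]
      simp only [add_sub_cancel_right]
      rw [if_pos (by rw [hdL]; exact hx), hLinv]
    · rw [if_neg hx, hgy]
      simp only [add_sub_cancel_right]
      push_neg at hx
      have : ¬ d ⬝ᵥ (A_R *ᵥ x) ≤ 0 := by
        rw [hdRx]; push_neg; positivity
      rw [if_neg this, hRinv]
  have hright : Function.RightInverse g f := by
    intro y
    rw [hgy]
    by_cases hy : d ⬝ᵥ (y - b) ≤ 0
    · rw [if_pos hy, hf]
      rw [if_pos (by rw [hcL]; exact hy)]
      rw [Matrix.mulVec_mulVec, Matrix.mul_nonsing_inv _ hL, Matrix.one_mulVec,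
        sub_add_cancel]
    · rw [if_neg hy, hf]
      push_neg at hy
      have : ¬ c ⬝ᵥ (A_R⁻¹ *ᵥ (y - b)) ≤ 0 := by
        rw [hcR]; push_neg; positivity
      rw [if_neg this]
      rw [Matrix.mulVec_mulVec, Matrix.mul_nonsing_inv _ hR, Matrix.one_mulVec,
        sub_add_cancel]
  exact ⟨hleft.injective, hright.surjective⟩
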